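/- Fix constants 0 < r_low < r_high and ε > 0 with r_high - 2ε > r_low + 2ε. Let r, r̂ : (0,∞) → (0,∞) be functions with r(u) = (γ u)^α for some γ > 0, α ∈ (0,2], and suppose u₁, u₂ > 0 satisfy r̂(u₁) = r_high - ε, r̂(u₂) = r_low + ε, and sup_{u : r(u) ∈ [r_low, r_high]} |ln r(u) - ln r̂(u)| ≤ ε, and that r(u₁), r(u₂) ∈ [r_low, r_high] with r_high - 2ε ≤ r(u₁) and r(u₂) ≤ r_low + 2ε. Define α̂ = (ln(r_high - ε) - ln(r_low + ε))/(ln u₁ - ln u₂). Then for any ε₁ > 0 satisfying (ε₁/4)·ln((r_high - 2ε)/(r_low + 2ε)) ≥ ε, we have |α̂ - α| < ε₁. -/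

import Mathlib

set_option maxHeartbeats 1000000 in
theorem alpha_estimate_precision
    (rlow rhigh ε γ α : ℝ) (u₁ u₂ : ℝ) (rhat : ℝ → ℝ) (ε₁ : ℝ)
    (hrlow : 0 < rlow) (horder : rlow + 2*ε < rhigh - 2*ε) (hε : 0 < ε)
    (hγ : 0 < γ) (hα : α ∈ Set.Ioc (0:ℝ) 2)
    (hu₁ : 0 < u₁) (hu₂ : 0 < u₂)
    (hhat₁ : rhat u₁ = rhigh - ε) (hhat₂ : rhat u₂ = rlow + ε)
    (hsup : ∀ u : ℝ, 0 < u → (γ * u) ^ α ∈ Set.Icc rlow rhigh →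
      |Real.log ((γ * u) ^ α) - Real.log (rhat u)| ≤ ε)
    (hr₁mem : (γ * u₁) ^ α ∈ Set.Icc rlow rhigh)
    (hr₂mem : (γ * u₂) ^ α ∈ Set.Icc rlow rhigh)
    (hr₁ : rhigh - 2*ε ≤ (γ * u₁) ^ α)
    (hr₂ : (γ * u₂) ^ α ≤ rlow + 2*ε)
    (hε₁ : 0 < ε₁)
    (hbig : ε ≤ (ε₁ / 4) * Real.log ((rhigh - 2*ε) / (rlow + 2*ε))) :
    |(Real.log (rhigh - ε) - Real.log (rlow + ε)) / (Real.log u₁ - Real.log u₂) - α| < ε₁ := by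
  obtain ⟨hα0, hα2⟩ := hα
  have hεl : (0:ℝ) < rlow + ε := by linarith
  have hRl2 : (0:ℝ) < rlow + 2*ε := by linarith
  have hRh2 : (0:ℝ) < rhigh - 2*ε := by linarith
  have hRhε : (0:ℝ) < rhigh - ε := by linarith
  set A := Real.log (rhigh - ε) with hA
  set B := Real.log (rlow + ε) with hB
  set L1 := Real.log ((γ * u₁) ^ α) with hL1d
  set L2 := Real.log ((γ * u₂) ^ α) with hL2d
  have hsup1 : |L1 - A| ≤ ε := by
    have := hsup u₁ hu₁ hr₁mem; rwa [hhat₁] at this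
  have hsup2 : |L2 - B| ≤ ε := by
    have := hsup u₂ hu₂ hr₂mem; rwa [hhat₂] at this
  have hL1ge : Real.log (rhigh - 2*ε) ≤ L1 := Real.log_le_log hRh2 hr₁
  have hL2le : L2 ≤ Real.log (rlow + 2*ε) := by
    have hpos : (0:ℝ) < (γ * u₂) ^ α := Real.rpow_pos_of_pos (mul_pos hγ hu₂) α
    exact Real.log_le_log hpos hr₂
  have hDpos : Real.log (rlow + 2*ε) < Real.log (rhigh - 2*ε) :=
    Real.log_lt_log hRl2 horder
  have hden : Real.log (rhigh - 2*ε) - Real.log (rlow + 2*ε) ≤ L1 - L2 := by linarith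
  have hdpos : 0 < L1 - L2 := by linarith
  rw [Real.log_div hRh2.ne' hRl2.ne'] at hbig
  -- rewrite log u₁ - log u₂ in terms of L1 - L2
  have hlog : Real.log u₁ - Real.log u₂ = (L1 - L2) / α := by
    rw [hL1d, hL2d, Real.log_rpow (mul_pos hγ hu₁), Real.log_rpow (mul_pos hγ hu₂),
      Real.log_mul hγ.ne' hu₁.ne', Real.log_mul hγ.ne' hu₂.ne']
    field_simp
    ring
  rw [hlog]
  have hexpr : (A - B) / ((L1 - L2) / α) - α
      = α * ((A - B) - (L1 - L2)) / (L1 - L2) := by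
    field_simp
  rw [hexpr, abs_div, abs_of_pos hdpos, div_lt_iff₀ hdpos]
  -- main dichotomy: either strict denominator, or the equality case with strict numerator
  have habs1 := abs_le.mp hsup1
  have habs2 := abs_le.mp hsup2
  have hmain : Real.log (rhigh - 2*ε) - Real.log (rlow + 2*ε) < L1 - L2 ∨
      (0 < (A - B) - (L1 - L2) ∧ (A - B) - (L1 - L2) < 2*ε) := by
    rcases lt_or_eq_of_le hden with h | h
    · exact Or.inl h
    · right
      have e1 : L1 = Real.log (rhigh - 2*ε) := by linarith
      have e2 : L2 = Real.log (rlow + 2*ε) := by linarith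
      have hs0 : Real.log (rhigh - 2*ε) < A := Real.log_lt_log hRh2 (by linarith)
      have ht0 : B < Real.log (rlow + 2*ε) := Real.log_lt_log hεl (by linarith)
      have hsle : A - Real.log (rhigh - 2*ε) ≤ ε := by
        rw [e1] at habs1; linarith [habs1.1]
      have htle : Real.log (rlow + 2*ε) - B ≤ ε := by
        rw [e2] at habs2; linarith [habs2.2]
      have hnot : A - Real.log (rhigh - 2*ε) < ε ∨ Real.log (rlow + 2*ε) - B < ε := by
        by_contra hcon
        push_neg at hcon
        obtain ⟨h1, h2⟩ := hcon
        have hs : A - Real.log (rhigh - 2*ε) = ε := le_antisymm hsle h1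
        have ht : Real.log (rlow + 2*ε) - B = ε := le_antisymm htle h2
        have eq1 : rhigh - ε = (rhigh - 2*ε) * Real.exp ε := by
          have : Real.exp A = Real.exp (Real.log (rhigh - 2*ε) + ε) := by
            rw [show Real.log (rhigh - 2*ε) + ε = A by linarith]
          rwa [hA, Real.exp_log hRhε, Real.exp_add, Real.exp_log hRh2] at this
        have eq2 : rlow + 2*ε = (rlow + ε) * Real.exp ε := by
          have : Real.exp (Real.log (rlow + 2*ε)) = Real.exp (B + ε) := by
            rw [show B + ε = Real.log (rlow + 2*ε) by linarith]
          rwa [hB, Real.exp_log hRl2, Real.exp_add, Real.exp_log hεl] at this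
        have hE : 1 < Real.exp ε := by
          rw [← Real.exp_zero]; exact Real.exp_lt_exp.mpr hε
        have hX : 0 < rhigh - 2*ε - (rlow + ε) := by linarith
        nlinarith [mul_pos hX (by linarith : (0:ℝ) < Real.exp ε - 1)]
      constructor
      · rw [← h]; linarith
      · rw [← h]
        rcases hnot with h' | h' <;> linarith
  have hN2 : (A - B) - (L1 - L2) ≤ 2*ε := by linarith [habs1.1, habs2.2]
  have hN2' : -(2*ε) ≤ (A - B) - (L1 - L2) := by linarith [habs1.2, habs2.1]
  have hbig4 : 4*ε ≤ ε₁ * (Real.log (rhigh - 2*ε) - Real.log (rlow + 2*ε)) := by linarith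
  set N := (A - B) - (L1 - L2) with hNdef
  rw [abs_lt]
  constructor
  · -- lower bound
    rcases hmain with hstr | ⟨hN0, _⟩
    · rcases le_or_gt 0 N with hN | hN
      · have h1 : 0 ≤ α * N := mul_nonneg hα0.le hN
        have h2 : 0 < ε₁ * (L1 - L2) := mul_pos hε₁ hdpos
        linarith
      · have h1 : 2 * N ≤ α * N := mul_le_mul_of_nonpos_right hα2 hN.le
        have h2 : ε₁ * (Real.log (rhigh - 2*ε) - Real.log (rlow + 2*ε)) < ε₁ * (L1 - L2) :=
          mul_lt_mul_of_pos_left hstr hε₁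
        linarith
    · have h1 : 0 < α * N := mul_pos hα0 hN0
      have h2 : 0 < ε₁ * (L1 - L2) := mul_pos hε₁ hdpos
      linarith
  · -- upper bound
    rcases hmain with hstr | ⟨hN0, hNlt⟩
    · rcases le_or_gt N 0 with hN | hN
      · have h1 : α * N ≤ 0 := mul_nonpos_of_nonneg_of_nonpos hα0.le hN
        have h2 : 0 < ε₁ * (L1 - L2) := mul_pos hε₁ hdpos
        linarith
      · have h1 : α * N ≤ 2 * N := mul_le_mul_of_nonneg_right hα2 hN.le
        have h2 : ε₁ * (Real.log (rhigh - 2*ε) - Real.log (rlow + 2*ε)) < ε₁ * (L1 - L2) :=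
          mul_lt_mul_of_pos_left hstr hε₁
        linarith
    · have h1 : α * N ≤ 2 * N := mul_le_mul_of_nonneg_right hα2 hN0.le
      have h2 : ε₁ * (Real.log (rhigh - 2*ε) - Real.log (rlow + 2*ε)) ≤ ε₁ * (L1 - L2) :=
        mul_le_mul_of_nonneg_left hden hε₁.le
      linarith
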